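/- Let α, β, γ be complex numbers, and let x : ℕ≥1 → ℂ be a sequence satisfying x(2n) = x(n) and x(2n+1) = α·x(n) + β·x(n+1) + γ for all n ≥ 1. Then x(n) = x(n^R) for all n ≥ 1, where n^R denotes the integer obtained by reversing the binary digits of n. -/

import Mathlib

/-- value of `1` followed by the reversed list (list is LSB-first, below an implicit leading 1). -/
def numL : List Bool → ℕ
  | [] => 1
  | b :: c => 2 * numL c + (if b then 1 else 0)

/-- plain value of a list of bits, LSB first. -/
def lvalL : List Bool → ℕ
  | [] => 0
  | b :: c => (if b then 1 else 0) + 2 * lvalL c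

lemma numL_pos (c : List Bool) : 1 ≤ numL c := by
  induction c with
  | nil => simp [numL]
  | cons b c ih => simp [numL]; omega

lemma numL_ge (c : List Bool) : 2 ^ c.length ≤ numL c := by
  induction c with
  | nil => simp [numL]
  | cons b c ih => simp [numL, pow_succ]; omega

lemma numL_lt (c : List Bool) : numL c < 2 ^ (c.length + 1) := by
  induction c with
  | nil => simp [numL]
  | cons b c ih =>
    simp only [numL, List.length_cons, pow_succ]
    cases b <;> simp <;> omega

lemma numL_eq_bit (b : Bool) (c : List Bool) : numL (b :: c) = Nat.bit b (numL c) := by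
  cases b <;> simp [numL, Nat.bit] <;> omega

lemma testBit_numL (c : List Bool) (i : ℕ) :
    (numL c).testBit i = (c ++ [true]).getD i false := by
  induction c generalizing i with
  | nil =>
    show Nat.testBit 1 i = _
    cases i with
    | zero => simp
    | succ j =>
      rw [Nat.testBit_add_one]
      simp
  | cons b c ih =>
    rw [numL_eq_bit]
    cases i with
    | zero => simp [Nat.testBit_bit_zero]
    | succ j => rw [Nat.testBit_bit_succ]; simpa using ih j

lemma log_numL (c : List Bool) : Nat.log 2 (numL c) = c.length :=
  Nat.log_eq_of_pow_le_of_lt_pow (numL_ge c) (numL_lt c)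

lemma lvalL_concat (d : List Bool) (b : Bool) :
    lvalL (d ++ [b]) = lvalL d + (if b then 1 else 0) * 2 ^ d.length := by
  induction d with
  | nil => simp [lvalL]
  | cons a d ih => cases b <;> simp [lvalL, ih, pow_succ] <;> ring

lemma sum_getD (e : List Bool) :
    ∑ i ∈ Finset.range e.length,
      (if e.getD (e.length - 1 - i) false then 2 ^ i else 0) = lvalL e.reverse := by
  induction e with
  | nil => simp [lvalL]
  | cons b e ih =>
    rw [List.length_cons, Finset.sum_range_succ]
    have h1 : ∀ i ∈ Finset.range e.length,
        (if (b :: e).getD (e.length + 1 - 1 - i) false then (2:ℕ) ^ i else 0)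
        = (if e.getD (e.length - 1 - i) false then 2 ^ i else 0) := by
      intro i hi
      rw [Finset.mem_range] at hi
      have : e.length + 1 - 1 - i = (e.length - 1 - i) + 1 := by omega
      rw [this]
      rfl
    rw [Finset.sum_congr rfl h1, ih]
    simp only [List.reverse_cons, lvalL_concat, List.length_reverse]
    have : e.length + 1 - 1 - e.length = 0 := by omega
    rw [this]
    simp [List.getD]

/-- The binary digit reversal of `n`. -/
def binRev (n : ℕ) : ℕ :=
  ∑ i ∈ Finset.range (Nat.log 2 n + 1),
    if n.testBit (Nat.log 2 n - i) then 2 ^ i else 0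

lemma binRev_numL (c : List Bool) : binRev (numL c) = 1 + 2 * lvalL c.reverse := by
  unfold binRev
  rw [log_numL]
  have h := sum_getD (c ++ [true])
  simp only [List.length_append, List.length_cons, List.length_nil] at h
  have h2 : ∀ i ∈ Finset.range (c.length + 1),
      (if (numL c).testBit (c.length - i) then (2:ℕ) ^ i else 0)
      = (if (c ++ [true]).getD (c.length + 0 + 1 - 1 - i) false then 2 ^ i else 0) := by
    intro i _
    rw [testBit_numL]
    norm_num
  rw [Finset.sum_congr rfl h2]
  rw [show c.length + 1 = c.length + 0 + 1 by omega]
  rw [h]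
  simp [lvalL]

lemma exists_numL (n : ℕ) (hn : 1 ≤ n) : ∃ c, numL c = n := by
  induction n using Nat.strong_induction_on with
  | _ n ih =>
    rcases eq_or_lt_of_le hn with h1 | h1
    · exact ⟨[], h1.symm ▸ rfl⟩
    · obtain ⟨c, hc⟩ := ih (n / 2) (by omega) (by omega)
      refine ⟨(n % 2 = 1 : Bool) :: c, ?_⟩
      simp only [numL, hc]
      have := Nat.div_add_mod n 2
      have h2 : n % 2 < 2 := Nat.mod_lt _ (by norm_num)
      interval_cases h : n % 2 <;> simp <;> omega

lemma numL_eq_lvalL (d : List Bool) : lvalL (d ++ [true]) = numL d := by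
  induction d with
  | nil => simp [lvalL, numL]
  | cons b d ih => cases b <;> simp [lvalL, numL, ih] <;> omega

section Analytic

variable (α β γ : ℂ)

/-- one step of the pair recursion. -/
def stp (b : Bool) (p : ℂ × ℂ × ℂ) : ℂ × ℂ × ℂ :=
  if b then (α * p.1 + β * p.2.1 + γ * p.2.2, p.2.1, p.2.2)
  else (p.1, α * p.1 + β * p.2.1 + γ * p.2.2, p.2.2)

/-- the certifying symmetric bilinear form. -/
def Bf (x1 : ℂ) (p q : ℂ × ℂ × ℂ) : ℂ :=
  α*(α-1)*p.1*q.1 + α*β*(p.1*q.2.1 + p.2.1*q.1) + α*γ*(p.1*q.2.2 + p.2.2*q.1)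
  + β*(β-1)*p.2.1*q.2.1 + β*γ*(p.2.1*q.2.2 + p.2.2*q.2.1) + γ*(γ - x1)*p.2.2*q.2.2

lemma Bf_comm (x1 : ℂ) (p q : ℂ × ℂ × ℂ) : Bf α β γ x1 p q = Bf α β γ x1 q p := by
  unfold Bf; ring

lemma Bf_shift (x1 : ℂ) (b : Bool) (p q : ℂ × ℂ × ℂ) :
    Bf α β γ x1 (stp α β γ b p) q = Bf α β γ x1 p (stp α β γ b q) := by
  cases b <;> simp [Bf, stp] <;> ring

variable (x : ℕ → ℂ)

/-- the vector `(x n, x (n+1), 1)` along a list of bits. -/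
def Vv (c : List Bool) : ℂ × ℂ × ℂ := (x (numL c), x (numL c + 1), 1)

variable (heven : ∀ n : ℕ, 1 ≤ n → x (2 * n) = x n)
variable (hodd : ∀ n : ℕ, 1 ≤ n → x (2 * n + 1) = α * x n + β * x (n + 1) + γ)

include heven hodd in
lemma Vv_cons (b : Bool) (c : List Bool) : Vv x (b :: c) = stp α β γ b (Vv x c) := by
  have h1 := numL_pos c
  cases b
  · show (x (2 * numL c + 0), x (2 * numL c + 0 + 1), (1:ℂ)) = _
    simp only [stp, if_neg (Bool.false_ne_true), Vv]
    rw [Nat.add_zero, heven _ h1, hodd _ h1]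
    simp
  · show (x (2 * numL c + 1), x (2 * numL c + 1 + 1), (1:ℂ)) = _
    simp only [stp, if_pos rfl, Vv]
    rw [hodd _ h1, show 2 * numL c + 1 + 1 = 2 * (numL c + 1) by ring,
      heven _ (by omega)]
    simp

include heven hodd in
lemma Bf_swap (x1 : ℂ) : ∀ c d : List Bool,
    Bf α β γ x1 (Vv x c) (Vv x d) = Bf α β γ x1 (Vv x []) (Vv x (c.reverse ++ d)) := by
  intro c
  induction c with
  | nil => simp
  | cons b c ih =>
    intro d
    rw [Vv_cons α β γ x heven hodd, Bf_shift,
      ← Vv_cons α β γ x heven hodd, ih (b :: d)]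
    congr 2
    simp

include heven hodd in
lemma Bf_rev (x1 : ℂ) (c : List Bool) :
    Bf α β γ x1 (Vv x []) (Vv x c) = Bf α β γ x1 (Vv x []) (Vv x c.reverse) := by
  have h := Bf_swap α β γ x heven hodd x1 c.reverse []
  rw [Bf_comm] at h
  rw [h]
  simp

include heven in
lemma Bf_norm (p : ℂ × ℂ × ℂ) :
    Bf α β γ (x 1) (Vv x []) p
      = (x 1 * (α + β - 1) + γ) * (α * p.1 + β * p.2.1 + γ * p.2.2) := by
  have hx2 : x 2 = x 1 := by have := heven 1 le_rfl; simpa using this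
  show Bf α β γ (x 1) (x 1, x (1 + 1), 1) p = _
  rw [show (1:ℕ) + 1 = 2 from rfl, hx2]
  unfold Bf
  ring

include heven hodd in
lemma x_const (hD : x 1 * (α + β - 1) + γ = 0) : ∀ n : ℕ, 1 ≤ n → x n = x 1 := by
  intro n
  induction n using Nat.strong_induction_on with
  | _ n ih =>
    intro hn
    rcases eq_or_lt_of_le hn with h1 | h1
    · rw [← h1]
    · rcases Nat.even_or_odd n with ⟨m, hm⟩ | ⟨m, hm⟩
      · have hm1 : 1 ≤ m := by omega
        rw [hm, show m + m = 2 * m by ring, heven _ hm1]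
        exact ih m (by omega) hm1
      · have hm1 : 1 ≤ m := by omega
        rw [hm, hodd _ hm1, ih m (by omega) hm1, ih (m+1) (by omega) (by omega)]
        linear_combination hD

include heven hodd in
lemma invariant (c : List Bool) :
    α * x (numL c) + β * x (numL c + 1) + γ
      = α * x (numL c.reverse) + β * x (numL c.reverse + 1) + γ := by
  by_cases hD : x 1 * (α + β - 1) + γ = 0
  · have h := x_const α β γ x heven hodd hD
    rw [h (numL c) (numL_pos c), h (numL c + 1) (by have := numL_pos c; omega),
      h (numL c.reverse) (numL_pos c.reverse),
      h (numL c.reverse + 1) (by have := numL_pos c.reverse; omega)]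
  · have h := Bf_rev α β γ x heven hodd (x 1) c
    rw [Bf_norm α β γ x heven, Bf_norm α β γ x heven] at h
    simp only [Vv, mul_one] at h
    exact mul_left_cancel₀ hD h

include heven hodd in
lemma main_list (c : List Bool) : x (numL c) = x (1 + 2 * lvalL c.reverse) := by
  induction c with
  | nil => simp [numL, lvalL]
  | cons b c ih =>
    have h1 := numL_pos c
    cases b
    · show x (2 * numL c + 0) = _
      rw [Nat.add_zero, heven _ h1, ih]
      congr 2
      simp [lvalL_concat]
    · show x (2 * numL c + 1) = _
      rw [hodd _ h1, invariant α β γ x heven hodd c,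
        ← hodd _ (numL_pos c.reverse)]
      congr 1
      simp only [List.reverse_cons, numL_eq_lvalL]
      omega

end Analytic

theorem digit_reversal_invariance (α β γ : ℂ) (x : ℕ → ℂ)
    (heven : ∀ n : ℕ, 1 ≤ n → x (2 * n) = x n)
    (hodd : ∀ n : ℕ, 1 ≤ n → x (2 * n + 1) = α * x n + β * x (n + 1) + γ)
    (n : ℕ) (hn : 1 ≤ n) :
    x n = x (binRev n) := by
  obtain ⟨c, hc⟩ := exists_numL n hn
  rw [← hc, binRev_numL]
  exact main_list α β γ x heven hodd c
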